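/- arXiv:2602.15008 — 4 statements merged into one kernel-verified Lean document; each statement's English description precedes it below -/
import Mathlib

section
/- For any real B > 0 and any real z with log z ≥ -B, one has z - 1 - log z ≥ (log z)^2 / (2(1 + B)) (more generally, z - 1 - log z ≳ (log z)^2 / B up to a universal constant when B ≥ 1). -/
open Real

private lemma aux_hasDerivAt_F (x : ℝ) :
    HasDerivAt (fun s : ℝ => 2 * (1 + s) * (Real.exp (-s) - 1 + s) - s ^ 2)
      (2 * x * (1 - Real.exp (-x))) x := by
  have he : HasDerivAt (fun s : ℝ => Real.exp (-s)) (-Real.exp (-x)) x := by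
    exact ((Real.hasDerivAt_exp (-x)).comp x ((hasDerivAt_id x).neg)).congr_deriv (by ring)
  have h1 : HasDerivAt (fun s : ℝ => 2 * (1 + s)) 2 x := by
    simpa using ((hasDerivAt_id x).const_add 1).const_mul 2
  have h2 : HasDerivAt (fun s : ℝ => Real.exp (-s) - 1 + s) (-Real.exp (-x) + 1) x := by
    exact (he.sub_const 1).add (hasDerivAt_id x)
  have h3 := (h1.mul h2).sub ((hasDerivAt_pow 2 x))
  refine h3.congr_deriv ?_
  ring

private lemma aux_F_nonneg {s : ℝ} (hs : 0 ≤ s) :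
    s ^ 2 ≤ 2 * (1 + s) * (Real.exp (-s) - 1 + s) := by
  set F : ℝ → ℝ := fun s => 2 * (1 + s) * (Real.exp (-s) - 1 + s) - s ^ 2 with hF
  have hmono : MonotoneOn F (Set.Ici (0 : ℝ)) := by
    apply monotoneOn_of_deriv_nonneg (convex_Ici 0)
    · exact fun x _ => (aux_hasDerivAt_F x).continuousAt.continuousWithinAt
    · exact fun x _ => (aux_hasDerivAt_F x).differentiableAt.differentiableWithinAt
    · intro x hx
      rw [(aux_hasDerivAt_F x).deriv]
      have hx0 : (0 : ℝ) < x := by simpa using hx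
      have := Real.exp_le_one_iff.2 (by linarith : -x ≤ 0)
      nlinarith
  have h0 : F 0 = 0 := by simp [hF]
  have := hmono (Set.self_mem_Ici) (Set.mem_Ici.2 hs) hs
  rw [h0] at this
  simpa [hF] using this

private lemma aux_quad {t : ℝ} (ht : 0 ≤ t) :
    t ^ 2 / 2 ≤ Real.exp t - 1 - t := by
  set G : ℝ → ℝ := fun t => Real.exp t - 1 - t - t ^ 2 / 2 with hG
  have hd : ∀ x : ℝ, HasDerivAt G (Real.exp x - 1 - x) x := by
    intro x
    have := (((Real.hasDerivAt_exp x).sub_const 1).sub (hasDerivAt_id x)).sub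
      ((hasDerivAt_pow 2 x).div_const 2)
    exact this.congr_deriv (by ring)
  have hmono : MonotoneOn G (Set.Ici (0 : ℝ)) := by
    apply monotoneOn_of_deriv_nonneg (convex_Ici 0)
    · exact fun x _ => (hd x).continuousAt.continuousWithinAt
    · exact fun x _ => (hd x).differentiableAt.differentiableWithinAt
    · intro x hx
      rw [(hd x).deriv]
      have := Real.add_one_le_exp x
      linarith
  have h0 : G 0 = 0 := by simp [hG]
  have := hmono (Set.self_mem_Ici) (Set.mem_Ici.2 ht) ht
  rw [h0] at this
  simp only [hG] at this
  linarith

/-- For any real `B > 0` and any real `z > 0` with `log z ≥ -B`, one has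
`z - 1 - log z ≥ (log z)^2 / (2(1 + B))`. -/
theorem sub_one_sub_log_ge_sq_log_div (B z : ℝ) (hB : 0 < B) (hz : 0 < z)
    (h : -B ≤ Real.log z) :
    (Real.log z) ^ 2 / (2 * (1 + B)) ≤ z - 1 - Real.log z := by
  set t := Real.log z with ht
  have hz' : z = Real.exp t := (Real.exp_log hz).symm
  have hBpos : (0 : ℝ) < 2 * (1 + B) := by linarith
  rw [div_le_iff₀ hBpos, hz']
  rcases le_or_gt 0 t with htp | htn
  · have := aux_quad htp
    nlinarith [sq_nonneg t]
  · have hs : 0 ≤ -t := by linarith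
    have key := aux_F_nonneg hs
    have hsB : -t ≤ B := by linarith
    have hnn : 0 ≤ Real.exp t - 1 - t := by
      have := Real.add_one_le_exp t; linarith
    simp only [neg_neg] at key
    nlinarith [key, hnn]
end

section
/- Let q be a probability distribution on a finite product space V^d, and let W be a random variable such that conditionally on W the coordinates X^1,...,X^d of X ~ q satisfy X^i independent of X^{-i} given W for every i. Then the dual total correlation B(q) := H(X) - Σ_i H(X^i | X^{-i}) satisfies B(q) ≤ I(X; W). If moreover W is discrete, then B(q) ≤ H(W). -/
open Finset

/-- Shannon entropy of a probability mass function on a finite type,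
`H(p) = -∑ x p(x) log p(x)`. -/
noncomputable def ent {α : Type*} [Fintype α] (p : α → ℝ) : ℝ :=
  ∑ x, Real.negMulLog (p x)

/-- Marginal distribution of the `i`-th coordinate of a distribution on `ι → V`. -/
noncomputable def margAt {ι V : Type*} [Fintype ι] [Fintype V] [DecidableEq ι]
    (q : (ι → V) → ℝ) (i : ι) : V → ℝ :=
  fun v => ∑ y : {j : ι // j ≠ i} → V, q (fun j => if h : j = i then v else y ⟨j, h⟩)

/-- Marginal distribution of all coordinates except the `i`-th of a distribution on `ι → V`. -/
noncomputable def margAway {ι V : Type*} [Fintype ι] [Fintype V] [DecidableEq ι]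
    (q : (ι → V) → ℝ) (i : ι) : ({j : ι // j ≠ i} → V) → ℝ :=
  fun y => ∑ v : V, q (fun j => if h : j = i then v else y ⟨j, h⟩)

/-- The conditional entropy `H(X^i | X^{-i}) = H(X) - H(X^{-i})`. -/
noncomputable def condEntAt {ι V : Type*} [Fintype ι] [Fintype V] [DecidableEq ι]
    (q : (ι → V) → ℝ) (i : ι) : ℝ :=
  ent q - ent (margAway q i)

/-- The dual total correlation `B(q) = H(X) - ∑ i H(X^i | X^{-i})`. -/
noncomputable def dualTC {ι V : Type*} [Fintype ι] [Fintype V] [DecidableEq ι]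
    (q : (ι → V) → ℝ) : ℝ :=
  ent q - ∑ i : ι, condEntAt q i

/-- The total correlation `C(q) = ∑ i H(X^i) - H(X)`. -/
noncomputable def totalCorr {ι V : Type*} [Fintype ι] [Fintype V] [DecidableEq ι]
    (q : (ι → V) → ℝ) : ℝ :=
  (∑ i : ι, ent (margAt q i)) - ent q


open Finset Real

section gibbs

/-- Gibbs' inequality: entropy is at most cross-entropy. -/
lemma gibbs_aux {α : Type*} [Fintype α] (a b : α → ℝ)
    (ha : ∀ z, 0 ≤ a z) (hb : ∀ z, 0 ≤ b z) (hz : ∀ z, b z = 0 → a z = 0)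
    (hs : ∑ z, b z ≤ ∑ z, a z) :
    ∑ z, Real.negMulLog (a z) ≤ ∑ z, -(a z * Real.log (b z)) := by
  have key : ∀ z, Real.negMulLog (a z) - (-(a z * Real.log (b z))) ≤ b z - a z := by
    intro z
    rcases eq_or_lt_of_le (ha z) with h0 | h0
    · simp [← h0, hb z]
    · have hbz : 0 < b z := by
        rcases eq_or_lt_of_le (hb z) with h1 | h1
        · exact absurd (hz z h1.symm) (by linarith)
        · exact h1
      have hlog : Real.log (b z / a z) ≤ b z / a z - 1 :=
        Real.log_le_sub_one_of_pos (by positivity)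
      rw [Real.log_div (ne_of_gt hbz) (ne_of_gt h0)] at hlog
      have := mul_le_mul_of_nonneg_left hlog (le_of_lt h0)
      rw [Real.negMulLog]
      have hfield : a z * (b z / a z - 1) = b z - a z := by
        field_simp
      nlinarith [hfield]
  have h2 : ∑ z, (Real.negMulLog (a z) - (-(a z * Real.log (b z))))
      ≤ ∑ z, (b z - a z) := Finset.sum_le_sum (fun z _ => key z)
  rw [Finset.sum_sub_distrib, Finset.sum_sub_distrib] at h2
  linarith

lemma ent_eq_neg_sum {α : Type*} [Fintype α] (f : α → ℝ) :
    ent f = -∑ x, f x * Real.log (f x) := by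
  rw [ent, ← Finset.sum_neg_distrib]
  exact Finset.sum_congr rfl fun x _ => by rw [Real.negMulLog]; ring

lemma negMulLog_sum_le {β : Type*} [Fintype β] (f : β → ℝ) (hf : ∀ w, 0 ≤ f w) :
    Real.negMulLog (∑ w, f w) ≤ ∑ w, Real.negMulLog (f w) := by
  have h : ∑ w, -(f w * Real.log (∑ w', f w')) = Real.negMulLog (∑ w, f w) := by
    rw [Finset.sum_neg_distrib, ← Finset.sum_mul, Real.negMulLog, neg_mul]
  rw [← h]
  apply Finset.sum_le_sum
  intro w _
  rcases eq_or_lt_of_le (hf w) with h0 | h0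
  · simp [← h0]
  · rw [Real.negMulLog, neg_mul]
    have : Real.log (f w) ≤ Real.log (∑ w', f w') :=
      Real.log_le_log h0 (Finset.single_le_sum (fun w' _ => hf w') (Finset.mem_univ w))
    nlinarith

end gibbs

section split

variable {ι V : Type*} [Fintype ι] [DecidableEq ι] [Fintype V]

/-- Pack a value at coordinate `i` and values elsewhere into a function. -/
def pk (i : ι) (v : V) (y : {j : ι // j ≠ i} → V) : ι → V :=
  fun j => if h : j = i then v else y ⟨j, h⟩

/-- Restrict a function away from coordinate `i`. -/
def rst (i : ι) (x : ι → V) : {j : ι // j ≠ i} → V := fun j => x j.1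

@[simp] lemma pk_at (i : ι) (v : V) (y : {j : ι // j ≠ i} → V) : pk i v y i = v :=
  dif_pos rfl

@[simp] lemma rst_pk (i : ι) (v : V) (y : {j : ι // j ≠ i} → V) : rst i (pk i v y) = y := by
  funext j
  simp [rst, pk, j.2]

lemma pk_rst (i : ι) (x : ι → V) : pk i (x i) (rst i x) = x := by
  funext j
  by_cases h : j = i
  · subst h; simp [pk]
  · simp [pk, rst, h]

/-- The splitting equivalence. -/
def pkEquiv (i : ι) : V × ({j : ι // j ≠ i} → V) ≃ (ι → V) where
  toFun z := pk i z.1 z.2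
  invFun x := (x i, rst i x)
  left_inv z := by cases z with | mk v y => simp
  right_inv x := pk_rst i x

lemma sum_pk {M : Type*} [AddCommMonoid M] (i : ι) (f : (ι → V) → M) :
    ∑ x, f x = ∑ v, ∑ y, f (pk i v y) := by
  rw [← Equiv.sum_comp (pkEquiv i) f, Fintype.sum_prod_type]
  rfl

lemma group_rst (i : ι) (f : (ι → V) → ℝ) (g : ({j : ι // j ≠ i} → V) → ℝ) :
    ∑ x, f x * g (rst i x) = ∑ y, (∑ v, f (pk i v y)) * g y := by
  rw [sum_pk i (fun x => f x * g (rst i x))]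
  simp only [rst_pk, Finset.sum_mul]
  exact Finset.sum_comm

lemma update_eq_pk (i : ι) (x : ι → V) (v : V) :
    Function.update x i v = pk i v (rst i x) := by
  funext j
  rw [Function.update_apply, pk]
  by_cases h : j = i
  · simp [h]
  · simp [h, rst]

end split

section group

lemma wgroup1 {α β : Type*} [Fintype α] [Fintype β] (f : α × β → ℝ) (g : α → ℝ) :
    ∑ z, f z * g z.1 = ∑ a, (∑ b, f (a, b)) * g a := by
  rw [Fintype.sum_prod_type]
  simp [Finset.sum_mul]

lemma wgroup2 {α β : Type*} [Fintype α] [Fintype β] (f : α × β → ℝ) (g : β → ℝ) :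
    ∑ z, f z * g z.2 = ∑ b, (∑ a, f (a, b)) * g b := by
  rw [Fintype.sum_prod_type_right]
  simp [Finset.sum_mul]

end group

section wgroupPk

variable {ι V W : Type*} [Fintype ι] [DecidableEq ι] [Fintype V] [Fintype W]

lemma wgroupA (i : ι) (f : ((ι → V) × W) → ℝ) (g : V × W → ℝ) :
    ∑ z, f z * g (z.1 i, z.2) = ∑ u : V × W, (∑ y, f (pk i u.1 y, u.2)) * g u := by
  rw [Fintype.sum_prod_type, Fintype.sum_prod_type]
  calc ∑ x, ∑ w, f (x, w) * g (x i, w)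
      = ∑ v, ∑ y, ∑ w, f (pk i v y, w) * g (v, w) := by
        rw [sum_pk i (fun x => ∑ w, f (x, w) * g (x i, w))]
        simp only [pk_at]
    _ = ∑ v, ∑ w, (∑ y, f (pk i v y, w)) * g (v, w) := by
        refine Finset.sum_congr rfl fun v _ => ?_
        rw [Finset.sum_comm]
        simp [Finset.sum_mul]

lemma wgroupB (i : ι) (f : ((ι → V) × W) → ℝ)
    (g : (({j : ι // j ≠ i} → V) × W) → ℝ) :
    ∑ z, f z * g (rst i z.1, z.2)
      = ∑ u : ({j : ι // j ≠ i} → V) × W, (∑ v, f (pk i v u.1, u.2)) * g u := by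
  rw [Fintype.sum_prod_type, Fintype.sum_prod_type]
  calc ∑ x, ∑ w, f (x, w) * g (rst i x, w)
      = ∑ v, ∑ y, ∑ w, f (pk i v y, w) * g (y, w) := by
        rw [sum_pk i (fun x => ∑ w, f (x, w) * g (rst i x, w))]
        simp only [rst_pk]
    _ = ∑ y, ∑ w, (∑ v, f (pk i v y, w)) * g (y, w) := by
        rw [Finset.sum_comm]
        refine Finset.sum_congr rfl fun y _ => ?_
        rw [Finset.sum_comm]
        simp [Finset.sum_mul]

end wgroupPk

section main

variable {ι V W : Type*} [Fintype ι] [DecidableEq ι] [Fintype V] [DecidableEq V] [Fintype W]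

/-- Marginal of `(X^i, W)`. -/
noncomputable def Af (p : ((ι → V) × W) → ℝ) (i : ι) : V × W → ℝ :=
  fun u => ∑ y, p (pk i u.1 y, u.2)

/-- Marginal of `(X^{-i}, W)`. -/
noncomputable def Bf (p : ((ι → V) × W) → ℝ) (i : ι) : ({j : ι // j ≠ i} → V) × W → ℝ :=
  fun u => ∑ v, p (pk i v u.1, u.2)

variable (p : ((ι → V) × W) → ℝ)

lemma p_le_A (hp : ∀ z, 0 ≤ p z) (i : ι) (x : ι → V) (w : W) :
    p (x, w) ≤ Af p i (x i, w) := by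
  have := Finset.single_le_sum (f := fun y => p (pk i (x i) y, w))
    (fun y _ => hp _) (Finset.mem_univ (rst i x))
  simp only [pk_rst] at this
  exact this

lemma p_le_B (hp : ∀ z, 0 ≤ p z) (i : ι) (x : ι → V) (w : W) :
    p (x, w) ≤ Bf p i (rst i x, w) := by
  have := Finset.single_le_sum (f := fun v => p (pk i v (rst i x), w))
    (fun v _ => hp _) (Finset.mem_univ (x i))
  simp only [pk_rst] at this
  exact this

lemma sum_v_A (i : ι) (w : W) : ∑ v, Af p i (v, w) = ∑ x, p (x, w) := by
  rw [sum_pk i (fun x => p (x, w))]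
  rfl

lemma sum_w_B (i : ι) (y : {j : ι // j ≠ i} → V) :
    ∑ w, Bf p i (y, w) = margAway (fun x => ∑ w, p (x, w)) i y := by
  calc ∑ w, Bf p i (y, w) = ∑ w, ∑ v, p (pk i v y, w) := rfl
    _ = ∑ v, ∑ w, p (pk i v y, w) := Finset.sum_comm
    _ = margAway (fun x => ∑ w, p (x, w)) i y := rfl

lemma q_le_Q (hp : ∀ z, 0 ≤ p z) (i : ι) (x : ι → V) :
    (∑ w, p (x, w)) ≤ margAway (fun x => ∑ w, p (x, w)) i (rst i x) := by
  have hQdef : margAway (fun x => ∑ w, p (x, w)) i (rst i x)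
      = ∑ v, ∑ w, p (pk i v (rst i x), w) := rfl
  rw [hQdef]
  have := Finset.single_le_sum (f := fun v => ∑ w, p (pk i v (rst i x), w))
    (fun v _ => Finset.sum_nonneg fun w _ => hp _) (Finset.mem_univ (x i))
  simp only [pk_rst] at this
  exact this

lemma sum_p_log_p : ∑ z, p z * Real.log (p z) = -ent p := by
  rw [ent_eq_neg_sum, neg_neg]

lemma sum_p_log_r :
    ∑ z, p z * Real.log (∑ x, p (x, z.2)) = -ent (fun w => ∑ x, p (x, w)) := by
  rw [ent_eq_neg_sum, neg_neg]
  exact wgroup2 p (fun w => Real.log (∑ x, p (x, w)))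

lemma sum_p_log_q :
    ∑ z, p z * Real.log (∑ w, p (z.1, w)) = -ent (fun x => ∑ w, p (x, w)) := by
  rw [ent_eq_neg_sum, neg_neg]
  exact wgroup1 p (fun x => Real.log (∑ w, p (x, w)))

lemma sum_p_log_A (i : ι) :
    ∑ z, p z * Real.log (Af p i (z.1 i, z.2)) = -ent (Af p i) := by
  rw [ent_eq_neg_sum, neg_neg]
  exact wgroupA i p (fun u => Real.log (Af p i u))

lemma sum_p_log_B (i : ι) :
    ∑ z, p z * Real.log (Bf p i (rst i z.1, z.2)) = -ent (Bf p i) := by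
  rw [ent_eq_neg_sum, neg_neg]
  exact wgroupB i p (fun u => Real.log (Bf p i u))

lemma sum_p_log_Q (i : ι) :
    ∑ z, p z * Real.log (margAway (fun x => ∑ w, p (x, w)) i (rst i z.1))
      = -ent (margAway (fun x => ∑ w, p (x, w)) i) := by
  rw [ent_eq_neg_sum, neg_neg]
  calc ∑ z, p z * Real.log (margAway (fun x => ∑ w, p (x, w)) i (rst i z.1))
      = ∑ u : ({j : ι // j ≠ i} → V) × W, (∑ v, p (pk i v u.1, u.2))
          * Real.log (margAway (fun x => ∑ w, p (x, w)) i u.1) :=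
        wgroupB i p (fun u => Real.log (margAway (fun x => ∑ w, p (x, w)) i u.1))
    _ = ∑ y, (∑ w, ∑ v, p (pk i v y, w))
          * Real.log (margAway (fun x => ∑ w, p (x, w)) i y) :=
        wgroup1 (fun u => ∑ v, p (pk i v u.1, u.2))
          (fun y => Real.log (margAway (fun x => ∑ w, p (x, w)) i y))
    _ = ∑ y, margAway (fun x => ∑ w, p (x, w)) i y
          * Real.log (margAway (fun x => ∑ w, p (x, w)) i y) := by
        refine Finset.sum_congr rfl fun y _ => ?_
        rw [Finset.sum_comm]
        rfl

end main

section core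

variable {ι V W : Type*} [Fintype ι] [DecidableEq ι] [Fintype V] [DecidableEq V] [Fintype W]
variable (p : ((ι → V) × W) → ℝ)

/-- Subadditivity: `H(X,W) ≤ H(W) + ∑ i (H(X^i,W) - H(W))`. -/
lemma lemA (hp : ∀ z, 0 ≤ p z) :
    ent p ≤ ent (fun w => ∑ x, p (x, w))
      + ∑ i : ι, (ent (Af p i) - ent (fun w => ∑ x, p (x, w))) := by
  classical
  have hr0 : ∀ w : W, 0 ≤ ∑ x, p (x, w) := fun w => Finset.sum_nonneg fun x _ => hp _
  have hpr : ∀ (x : ι → V) (w : W), p (x, w) ≤ ∑ x', p (x', w) :=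
    fun x w => Finset.single_le_sum (fun x' _ => hp (x', w)) (Finset.mem_univ x)
  have hA0 : ∀ (i : ι) (u : V × W), 0 ≤ Af p i u :=
    fun i u => Finset.sum_nonneg fun y _ => hp _
  set b : ((ι → V) × W) → ℝ :=
    fun z => (∑ x, p (x, z.2)) * ∏ i, (Af p i (z.1 i, z.2) / ∑ x, p (x, z.2)) with hb_def
  have hb0 : ∀ z, 0 ≤ b z := fun z =>
    mul_nonneg (hr0 _) (Finset.prod_nonneg fun i _ => div_nonneg (hA0 i _) (hr0 _))
  have hbz : ∀ z, b z = 0 → p z = 0 := by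
    rintro ⟨x, w⟩ h
    rcases mul_eq_zero.mp h with h | h
    · exact le_antisymm (h ▸ hpr x w) (hp _)
    · obtain ⟨i, -, hi⟩ := Finset.prod_eq_zero_iff.mp h
      rcases div_eq_zero_iff.mp hi with h2 | h2
      · exact le_antisymm ((p_le_A p hp i x w).trans h2.le) (hp _)
      · exact le_antisymm (h2 ▸ hpr x w) (hp _)
  have hs : ∑ z, b z ≤ ∑ z, p z := by
    rw [Fintype.sum_prod_type_right (f := b), Fintype.sum_prod_type_right (f := p)]
    refine Finset.sum_le_sum fun w _ => ?_
    by_cases h : (∑ x, p (x, w)) = 0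
    · simp [hb_def, h, hr0 w]
    · have : ∑ x : ι → V, b (x, w) = ∑ x, p (x, w) := by
        calc ∑ x : ι → V, b (x, w)
            = (∑ x, p (x, w)) * ∑ x : ι → V, ∏ i, (Af p i (x i, w) / ∑ x', p (x', w)) := by
              rw [Finset.mul_sum]
          _ = (∑ x, p (x, w)) * ∏ i, ∑ v, (Af p i (v, w) / ∑ x', p (x', w)) := by
              rw [Fintype.prod_sum]
          _ = ∑ x, p (x, w) := by
              have : ∀ i : ι, ∑ v, (Af p i (v, w) / ∑ x', p (x', w)) = 1 := by
                intro i
                rw [← Finset.sum_div, sum_v_A, div_self h]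
              simp [this]
      rw [this]
  have hgibbs := gibbs_aux p b hp hb0 hbz hs
  have hpt : ∀ z, -(p z * Real.log (b z))
      = -(p z * Real.log (∑ x, p (x, z.2)))
        + ∑ i, (-(p z * Real.log (Af p i (z.1 i, z.2)))
            + p z * Real.log (∑ x, p (x, z.2))) := by
    rintro ⟨x, w⟩
    by_cases h0 : p (x, w) = 0
    · simp [h0]
    have hpz : 0 < p (x, w) := lt_of_le_of_ne (hp _) (Ne.symm h0)
    have hrz : 0 < ∑ x', p (x', w) := lt_of_lt_of_le hpz (hpr x w)
    have hAz : ∀ i, 0 < Af p i (x i, w) := fun i => lt_of_lt_of_le hpz (p_le_A p hp i x w)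
    have hprod : 0 < ∏ i, (Af p i (x i, w) / ∑ x', p (x', w)) :=
      Finset.prod_pos fun i _ => div_pos (hAz i) hrz
    have hlb : Real.log (b (x, w)) = Real.log (∑ x', p (x', w))
        + ∑ i, (Real.log (Af p i (x i, w)) - Real.log (∑ x', p (x', w))) := by
      rw [hb_def]
      rw [Real.log_mul (ne_of_gt hrz) (ne_of_gt hprod),
        Real.log_prod (fun i _ => ne_of_gt (div_pos (hAz i) hrz))]
      congr 1
      exact Finset.sum_congr rfl fun i _ =>
        Real.log_div (ne_of_gt (hAz i)) (ne_of_gt hrz)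
    rw [hlb, mul_add, neg_add, Finset.mul_sum, ← Finset.sum_neg_distrib]
    congr 1
    exact Finset.sum_congr rfl fun i _ => by ring
  have hev : ∑ z, -(p z * Real.log (b z))
      = ent (fun w => ∑ x, p (x, w))
        + ∑ i : ι, (ent (Af p i) - ent (fun w => ∑ x, p (x, w))) := by
    rw [Finset.sum_congr rfl fun z _ => hpt z, Finset.sum_add_distrib]
    congr 1
    · rw [Finset.sum_neg_distrib, sum_p_log_r, neg_neg]
    · rw [Finset.sum_comm]
      refine Finset.sum_congr rfl fun i _ => ?_
      rw [Finset.sum_add_distrib, Finset.sum_neg_distrib, sum_p_log_A, sum_p_log_r, neg_neg]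
      ring
  calc ent p = ∑ z, Real.negMulLog (p z) := rfl
    _ ≤ ∑ z, -(p z * Real.log (b z)) := hgibbs
    _ = _ := hev

end core

section core2

variable {ι V W : Type*} [Fintype ι] [DecidableEq ι] [Fintype V] [DecidableEq V] [Fintype W]
variable (p : ((ι → V) × W) → ℝ)

/-- CI identity: `H(X,W) + H(W) = H(X^i,W) + H(X^{-i},W)`. -/
lemma lemB (hp : ∀ z, 0 ≤ p z) (i : ι)
    (hCIi : ∀ (x : ι → V) (w : W),
      p (x, w) * (∑ x', p (x', w))
        = (∑ x', if x' i = x i then p (x', w) else 0)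
            * (∑ v, p (Function.update x i v, w))) :
    ent p + ent (fun w => ∑ x, p (x, w)) = ent (Af p i) + ent (Bf p i) := by
  have hpr : ∀ (x : ι → V) (w : W), p (x, w) ≤ ∑ x', p (x', w) :=
    fun x w => Finset.single_le_sum (fun x' _ => hp (x', w)) (Finset.mem_univ x)
  have hAeq : ∀ (x : ι → V) (w : W),
      (∑ x', if x' i = x i then p (x', w) else 0) = Af p i (x i, w) := by
    intro x w
    rw [sum_pk i (fun x' => if x' i = x i then p (x', w) else 0)]
    simp only [pk_at]
    calc ∑ v, ∑ y, (if v = x i then p (pk i v y, w) else 0)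
        = ∑ v, (if v = x i then ∑ y, p (pk i v y, w) else 0) :=
          Finset.sum_congr rfl fun v _ => by split <;> simp
      _ = Af p i (x i, w) := by
          rw [Finset.sum_ite_eq' Finset.univ (x i) (fun v => ∑ y, p (pk i v y, w))]
          simp
          rfl
  have hBeq : ∀ (x : ι → V) (w : W),
      (∑ v, p (Function.update x i v, w)) = Bf p i (rst i x, w) :=
    fun x w => Finset.sum_congr rfl fun v _ => by rw [update_eq_pk]
  have key : ∀ z : (ι → V) × W,
      p z * Real.log (p z) + p z * Real.log (∑ x', p (x', z.2))
        = p z * Real.log (Af p i (z.1 i, z.2)) + p z * Real.log (Bf p i (rst i z.1, z.2)) := by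
    rintro ⟨x, w⟩
    by_cases h0 : p (x, w) = 0
    · simp [h0]
    have hpz : 0 < p (x, w) := lt_of_le_of_ne (hp _) (Ne.symm h0)
    have hrz : 0 < ∑ x', p (x', w) := lt_of_lt_of_le hpz (hpr x w)
    have hAz : 0 < Af p i (x i, w) := lt_of_lt_of_le hpz (p_le_A p hp i x w)
    have hBz : 0 < Bf p i (rst i x, w) := lt_of_lt_of_le hpz (p_le_B p hp i x w)
    have hci := hCIi x w
    rw [hAeq x w, hBeq x w] at hci
    have hlog : Real.log (p (x, w)) + Real.log (∑ x', p (x', w))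
        = Real.log (Af p i (x i, w)) + Real.log (Bf p i (rst i x, w)) := by
      rw [← Real.log_mul h0 (ne_of_gt hrz), ← Real.log_mul (ne_of_gt hAz) (ne_of_gt hBz), hci]
    calc p (x, w) * Real.log (p (x, w)) + p (x, w) * Real.log (∑ x', p (x', w))
        = p (x, w) * (Real.log (p (x, w)) + Real.log (∑ x', p (x', w))) := by ring
      _ = p (x, w) * (Real.log (Af p i (x i, w)) + Real.log (Bf p i (rst i x, w))) := by
          rw [hlog]
      _ = _ := by ring
  have H : ∑ z, (p z * Real.log (p z) + p z * Real.log (∑ x', p (x', z.2)))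
      = ∑ z, (p z * Real.log (Af p i (z.1 i, z.2)) + p z * Real.log (Bf p i (rst i z.1, z.2))) :=
    Finset.sum_congr rfl fun z _ => key z
  rw [Finset.sum_add_distrib, Finset.sum_add_distrib, sum_p_log_p, sum_p_log_r,
    sum_p_log_A, sum_p_log_B] at H
  linarith

/-- Conditioning reduces entropy: `H(X,W) + H(X^{-i}) ≤ H(X) + H(X^{-i},W)`. -/
lemma lemC (hp : ∀ z, 0 ≤ p z) (i : ι) :
    ent p ≤ ent (fun x => ∑ w, p (x, w)) + ent (Bf p i)
      - ent (margAway (fun x => ∑ w, p (x, w)) i) := by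
  have hpq : ∀ (x : ι → V) (w : W), p (x, w) ≤ ∑ w', p (x, w') :=
    fun x w => Finset.single_le_sum (fun w' _ => hp (x, w')) (Finset.mem_univ w)
  have hq0 : ∀ x : ι → V, 0 ≤ ∑ w, p (x, w) := fun x => Finset.sum_nonneg fun w _ => hp _
  have hQ0 : ∀ y, 0 ≤ margAway (fun x => ∑ w, p (x, w)) i y := by
    intro y
    rw [← sum_w_B]
    exact Finset.sum_nonneg fun w _ => Finset.sum_nonneg fun v _ => hp _
  set b : ((ι → V) × W) → ℝ :=
    fun z => (∑ w, p (z.1, w))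
      * (Bf p i (rst i z.1, z.2) / margAway (fun x => ∑ w, p (x, w)) i (rst i z.1)) with hb_def
  have hb0 : ∀ z, 0 ≤ b z := fun z =>
    mul_nonneg (hq0 _) (div_nonneg (Finset.sum_nonneg fun v _ => hp _) (hQ0 _))
  have hbz : ∀ z, b z = 0 → p z = 0 := by
    rintro ⟨x, w⟩ h
    rcases mul_eq_zero.mp h with h | h
    · exact le_antisymm (h ▸ hpq x w) (hp _)
    · rcases div_eq_zero_iff.mp h with h2 | h2
      · exact le_antisymm ((p_le_B p hp i x w).trans h2.le) (hp _)
      · have hq : (∑ w', p (x, w')) = 0 :=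
          le_antisymm (h2 ▸ q_le_Q p hp i x) (hq0 x)
        exact le_antisymm (hq ▸ hpq x w) (hp _)
  have hs : ∑ z, b z ≤ ∑ z, p z := by
    rw [Fintype.sum_prod_type (f := b), Fintype.sum_prod_type (f := p)]
    refine Finset.sum_le_sum fun x _ => ?_
    by_cases hQ : margAway (fun x => ∑ w, p (x, w)) i (rst i x) = 0
    · have hq : (∑ w', p (x, w')) = 0 := le_antisymm (hQ ▸ q_le_Q p hp i x) (hq0 x)
      simp [hb_def, hq]
    · have : ∑ w, b (x, w) = ∑ w, p (x, w) := by
        calc ∑ w, b (x, w)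
            = ∑ w, (∑ w', p (x, w')) * (Bf p i (rst i x, w)
                / margAway (fun x => ∑ w, p (x, w)) i (rst i x)) := rfl
          _ = (∑ w', p (x, w')) * ((∑ w, Bf p i (rst i x, w))
                / margAway (fun x => ∑ w, p (x, w)) i (rst i x)) := by
              rw [Finset.sum_div, Finset.mul_sum]
          _ = ∑ w, p (x, w) := by
              rw [sum_w_B, div_self hQ, mul_one]
      rw [this]
  have hgibbs := gibbs_aux p b hp hb0 hbz hs
  have hpt : ∀ z, -(p z * Real.log (b z))
      = -(p z * Real.log (∑ w, p (z.1, w)))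
        + (-(p z * Real.log (Bf p i (rst i z.1, z.2))))
        + p z * Real.log (margAway (fun x => ∑ w, p (x, w)) i (rst i z.1)) := by
    rintro ⟨x, w⟩
    by_cases h0 : p (x, w) = 0
    · simp [h0]
    have hpz : 0 < p (x, w) := lt_of_le_of_ne (hp _) (Ne.symm h0)
    have hqz : 0 < ∑ w', p (x, w') := lt_of_lt_of_le hpz (hpq x w)
    have hBz : 0 < Bf p i (rst i x, w) := lt_of_lt_of_le hpz (p_le_B p hp i x w)
    have hQz : 0 < margAway (fun x => ∑ w, p (x, w)) i (rst i x) :=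
      lt_of_lt_of_le hqz (q_le_Q p hp i x)
    have hlb : Real.log (b (x, w)) = Real.log (∑ w', p (x, w'))
        + (Real.log (Bf p i (rst i x, w))
          - Real.log (margAway (fun x => ∑ w, p (x, w)) i (rst i x))) := by
      rw [hb_def]
      rw [Real.log_mul (ne_of_gt hqz) (ne_of_gt (div_pos hBz hQz)),
        Real.log_div (ne_of_gt hBz) (ne_of_gt hQz)]
    rw [hlb]
    ring
  have hev : ∑ z, -(p z * Real.log (b z))
      = ent (fun x => ∑ w, p (x, w)) + ent (Bf p i)
        - ent (margAway (fun x => ∑ w, p (x, w)) i) := by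
    rw [Finset.sum_congr rfl fun z _ => hpt z, Finset.sum_add_distrib,
      Finset.sum_add_distrib, Finset.sum_neg_distrib, Finset.sum_neg_distrib,
      sum_p_log_q, sum_p_log_B, sum_p_log_Q]
    ring
  calc ent p = ∑ z, Real.negMulLog (p z) := rfl
    _ ≤ ∑ z, -(p z * Real.log (b z)) := hgibbs
    _ = _ := hev

/-- Marginalization does not increase entropy: `H(X) ≤ H(X,W)`. -/
lemma lemD (hp : ∀ z, 0 ≤ p z) :
    ent (fun x => ∑ w, p (x, w)) ≤ ent p := by
  calc ent (fun x => ∑ w, p (x, w)) = ∑ x, Real.negMulLog (∑ w, p (x, w)) := rfl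
    _ ≤ ∑ x, ∑ w, Real.negMulLog (p (x, w)) :=
        Finset.sum_le_sum fun x _ => negMulLog_sum_le (fun w => p (x, w)) (fun w => hp _)
    _ = ent p := by rw [ent, Fintype.sum_prod_type]

end core2

/-- Dual total correlation is bounded by mutual information with a conditionally separating
variable: if `X^i ⊥ X^{-i} | W` for every `i`, then `B(law of X) ≤ I(X;W)`, and (since `W` is
discrete here) also `B(law of X) ≤ H(W)`.  Mutual information is written as
`I(X;W) = H(X) + H(W) - H(X,W)`. -/
theorem dualTC_le_mutualInfo_of_condIndep
    (ι V W : Type*) [Fintype ι] [DecidableEq ι] [Fintype V] [DecidableEq V] [Fintype W]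
    (p : ((ι → V) × W) → ℝ)
    (hp : ∀ z, 0 ≤ p z) (hps : ∑ z, p z = 1)
    (hCI : ∀ (i : ι) (x : ι → V) (w : W),
      p (x, w) * (∑ x', p (x', w))
        = (∑ x', if x' i = x i then p (x', w) else 0)
            * (∑ v, p (Function.update x i v, w))) :
    dualTC (fun x => ∑ w, p (x, w))
      ≤ ent (fun x => ∑ w, p (x, w)) + ent (fun w => ∑ x, p (x, w)) - ent p ∧
    dualTC (fun x => ∑ w, p (x, w)) ≤ ent (fun w => ∑ x, p (x, w)) := by
  have hB : ∀ i : ι, ent p + ent (fun w => ∑ x, p (x, w)) = ent (Af p i) + ent (Bf p i) :=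
    fun i => lemB p hp i (hCI i)
  have hC : ∀ i : ι, ent p ≤ ent (fun x => ∑ w, p (x, w)) + ent (Bf p i)
      - ent (margAway (fun x => ∑ w, p (x, w)) i) := fun i => lemC p hp i
  have hA := lemA p hp
  have hD := lemD p hp
  have hsum : ∑ i : ι, (ent (Af p i) - ent (fun w => ∑ x, p (x, w)))
      ≤ ∑ i : ι, (ent (fun x => ∑ w, p (x, w)) - ent (margAway (fun x => ∑ w, p (x, w)) i)) := by
    refine Finset.sum_le_sum fun i _ => ?_
    have h1 := hB i
    have h2 := hC i
    linarith
  have hmain : ent p - ent (fun w => ∑ x, p (x, w))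
      ≤ ∑ i : ι, (ent (fun x => ∑ w, p (x, w)) - ent (margAway (fun x => ∑ w, p (x, w)) i)) := by
    linarith
  have hdual : dualTC (fun x => ∑ w, p (x, w))
      = ent (fun x => ∑ w, p (x, w))
        - ∑ i : ι, (ent (fun x => ∑ w, p (x, w)) - ent (margAway (fun x => ∑ w, p (x, w)) i)) := by
    simp only [dualTC, condEntAt]
  constructor
  · rw [hdual]
    linarith
  · rw [hdual]
    linarith
end

section
/- For the uniform noising process on [S]^d with rate Q^tok(a,b) = 1/S for a ≠ b, the score function satisfies s_t(y,x) = E_{x_0~q_0}[α_t^{ham(y,x_0)}] / E_{x_0~q_0}[α_t^{ham(x,x_0)}], where α_t = (1 - e^{-t})/(1 + (S-1)e^{-t}), and consequently for any x, y at Hamming distance 1, |log s_t(y,x)| ≤ -log α_t ≲ log S + max(log(1/t), 0). -/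
open Finset

/-- Hamming distance on `[S]^d`. -/
def hamm {S d : ℕ} (x y : Fin d → Fin S) : ℕ :=
  (Finset.univ.filter fun i => x i ≠ y i).card

/-- `α_t = (1 - e^{-t})/(1 + (S-1)e^{-t})`. -/
noncomputable def alphaUnif (S : ℕ) (t : ℝ) : ℝ :=
  (1 - Real.exp (-t)) / (1 + ((S : ℝ) - 1) * Real.exp (-t))

/-- The marginal at time `t` of the uniform noising process on `[S]^d` started at `q0`,
obtained from the product transition kernel
`q_{t|0}(y|x0) = ((1-e^{-t})/S)^{ham(y,x0)} ((1+(S-1)e^{-t})/S)^{d-ham(y,x0)}`. -/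
noncomputable def qtUnif {S d : ℕ} (q0 : (Fin d → Fin S) → ℝ) (t : ℝ)
    (y : Fin d → Fin S) : ℝ :=
  ∑ x0, q0 x0 * ((1 + ((S : ℝ) - 1) * Real.exp (-t)) / S) ^ d * alphaUnif S t ^ hamm y x0

lemma hamm_eq {S d : ℕ} (x y : Fin d → Fin S) : hamm x y = hammingDist x y := rfl

/-- For the uniform noising process on `[S]^d`, the score function satisfies
`s_t(y,x) = E_{x0~q0}[α_t^{ham(y,x0)}] / E_{x0~q0}[α_t^{ham(x,x0)}]`, and consequently for
any `x, y` at Hamming distance `1`, `|log s_t(y,x)| ≤ -log α_t ≲ log S + max(log(1/t), 0)`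
with a universal implied constant. -/
theorem uniform_score_eq_and_log_bound :
    ∃ C : ℝ, 0 < C ∧
      ∀ (S d : ℕ), 2 ≤ S →
        ∀ (q0 : (Fin d → Fin S) → ℝ), (∀ z, 0 ≤ q0 z) → (∑ z, q0 z = 1) →
        ∀ (t : ℝ), 0 < t →
        ∀ (x y : Fin d → Fin S), hamm x y = 1 →
          qtUnif q0 t y / qtUnif q0 t x
            = (∑ x0, q0 x0 * alphaUnif S t ^ hamm y x0)
                / (∑ x0, q0 x0 * alphaUnif S t ^ hamm x x0) ∧
          |Real.log (qtUnif q0 t y / qtUnif q0 t x)| ≤ -Real.log (alphaUnif S t) ∧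
          -Real.log (alphaUnif S t) ≤ C * (Real.log S + max (Real.log (1 / t)) 0) := by
  refine ⟨2, by norm_num, ?_⟩
  intro S d hS q0 hq0 hsum t ht x y hxy
  have hS1 : (2:ℝ) ≤ (S:ℝ) := by exact_mod_cast hS
  have he0 : 0 < Real.exp (-t) := Real.exp_pos _
  have he1 : Real.exp (-t) < 1 := Real.exp_lt_one_iff.2 (by linarith)
  set e := Real.exp (-t) with he
  have hden : 0 < 1 + ((S : ℝ) - 1) * e := by nlinarith
  have hα0 : 0 < alphaUnif S t := div_pos (by linarith) hden
  have hα1 : alphaUnif S t < 1 := (div_lt_one hden).2 (by nlinarith)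
  set α := alphaUnif S t with hαdef
  set A := ∑ x0, q0 x0 * α ^ hamm y x0 with hA
  set B := ∑ x0, q0 x0 * α ^ hamm x x0 with hB
  have hc : ((1 + ((S : ℝ) - 1) * e) / S) ^ d ≠ 0 := by positivity
  have hqy : qtUnif q0 t y = ((1 + ((S : ℝ) - 1) * e) / S) ^ d * A := by
    rw [qtUnif, hA, Finset.mul_sum]
    exact Finset.sum_congr rfl fun x0 _ => by ring
  have hqx : qtUnif q0 t x = ((1 + ((S : ℝ) - 1) * e) / S) ^ d * B := by
    rw [qtUnif, hB, Finset.mul_sum]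
    exact Finset.sum_congr rfl fun x0 _ => by ring
  have part1 : qtUnif q0 t y / qtUnif q0 t x = A / B := by
    rw [hqy, hqx, mul_div_mul_left _ _ hc]
  -- positivity of A and B
  obtain ⟨z, hz⟩ : ∃ z, 0 < q0 z := by
    by_contra h
    push_neg at h
    have : (∑ z, q0 z) ≤ 0 := Finset.sum_nonpos fun z _ => h z
    linarith [hsum]
  have hApos : 0 < A := by
    refine Finset.sum_pos' (fun x0 _ => mul_nonneg (hq0 x0) (pow_nonneg hα0.le _))
      ⟨z, Finset.mem_univ z, mul_pos hz (pow_pos hα0 _)⟩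
  have hBpos : 0 < B := by
    refine Finset.sum_pos' (fun x0 _ => mul_nonneg (hq0 x0) (pow_nonneg hα0.le _))
      ⟨z, Finset.mem_univ z, mul_pos hz (pow_pos hα0 _)⟩
  -- triangle inequalities
  have htri : ∀ x0 : Fin d → Fin S,
      hamm x x0 ≤ hamm y x0 + 1 ∧ hamm y x0 ≤ hamm x x0 + 1 := by
    intro x0
    have h1 := hammingDist_triangle x y x0
    have h2 := hammingDist_triangle y x x0
    have hc' : hammingDist y x = 1 := by rw [hammingDist_comm, ← hamm_eq, hxy]
    simp only [hamm_eq] at hxy ⊢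
    constructor
    · rw [hxy] at h1; omega
    · rw [hc'] at h2; omega
  have hαA : α * A ≤ B := by
    rw [Finset.mul_sum]
    refine Finset.sum_le_sum fun x0 _ => ?_
    have : α ^ (hamm y x0 + 1) ≤ α ^ hamm x x0 :=
      pow_le_pow_of_le_one hα0.le hα1.le (htri x0).1
    calc α * (q0 x0 * α ^ hamm y x0) = q0 x0 * α ^ (hamm y x0 + 1) := by ring
      _ ≤ q0 x0 * α ^ hamm x x0 := mul_le_mul_of_nonneg_left this (hq0 x0)
  have hαB : α * B ≤ A := by
    rw [Finset.mul_sum]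
    refine Finset.sum_le_sum fun x0 _ => ?_
    have : α ^ (hamm x x0 + 1) ≤ α ^ hamm y x0 :=
      pow_le_pow_of_le_one hα0.le hα1.le (htri x0).2
    calc α * (q0 x0 * α ^ hamm x x0) = q0 x0 * α ^ (hamm x x0 + 1) := by ring
      _ ≤ q0 x0 * α ^ hamm y x0 := mul_le_mul_of_nonneg_left this (hq0 x0)
  have hlow : α ≤ A / B := (le_div_iff₀ hBpos).2 (by linarith)
  have hhigh : A / B ≤ α⁻¹ := by
    rw [div_le_iff₀ hBpos]
    rw [inv_mul_eq_div, le_div_iff₀ hα0]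
    linarith [hαA]
  have part2 : |Real.log (qtUnif q0 t y / qtUnif q0 t x)| ≤ -Real.log α := by
    rw [part1, abs_le]
    constructor
    · rw [neg_neg]
      exact Real.log_le_log hα0 hlow
    · calc Real.log (A / B) ≤ Real.log α⁻¹ :=
            Real.log_le_log (div_pos hApos hBpos) hhigh
        _ = -Real.log α := Real.log_inv α
  refine ⟨part1, part2, ?_⟩
  -- third part
  have hnum_le : 1 + ((S : ℝ) - 1) * e ≤ S := by nlinarith
  have hmin : min t 1 / 2 ≤ 1 - e := by
    rcases le_total t 1 with h | h
    · have h1 : t + 1 ≤ Real.exp t := Real.add_one_le_exp t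
      have h2 : e = (Real.exp t)⁻¹ := by rw [he, Real.exp_neg]
      have h3 : e ≤ (t + 1)⁻¹ := by
        rw [h2]
        exact inv_anti₀ (by linarith) h1
      have h4 : (t + 1)⁻¹ ≤ 1 - t / 2 := by
        rw [inv_le_iff_one_le_mul₀ (by linarith)]
        nlinarith
      rw [min_eq_left h]
      linarith
    · have h1 : e ≤ Real.exp (-1) := Real.exp_le_exp.2 (by linarith)
      have h2 : Real.exp (-1) ≤ 1/2 := by
        rw [Real.exp_neg, inv_le_comm₀ (Real.exp_pos 1) (by norm_num)]
        norm_num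
        linarith [Real.add_one_le_exp 1]
      rw [min_eq_right h]
      linarith
  have hminpos : 0 < min t 1 := lt_min ht one_pos
  have hinv : α⁻¹ ≤ 2 * S * max (1/t) 1 := by
    have hmax : (min t 1)⁻¹ = max (1/t) 1 := by
      rcases le_total t 1 with h | h
      · rw [min_eq_left h, max_eq_left (by rw [one_div]; exact one_le_inv_iff₀.2 ⟨ht, h⟩),
          one_div]
      · rw [min_eq_right h, max_eq_right (by rw [one_div]; exact inv_le_one_of_one_le₀ h)]
        norm_num
    have : α⁻¹ = (1 + ((S : ℝ) - 1) * e) / (1 - e) := by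
      rw [hαdef, alphaUnif, ← he, inv_div]
    rw [this, ← hmax]
    rw [div_le_iff₀ (by linarith)]
    have h1 : 2 * S * (min t 1)⁻¹ * (1 - e) ≥ 2 * S * (min t 1)⁻¹ * (min t 1 / 2) := by
      have hpos : 0 < 2 * (S : ℝ) * (min t 1)⁻¹ := by positivity
      exact mul_le_mul_of_nonneg_left hmin hpos.le
    have h2 : 2 * (S : ℝ) * (min t 1)⁻¹ * (min t 1 / 2) = S := by
      field_simp
    linarith
  have hmaxlog : Real.log (max (1/t) 1) = max (Real.log (1/t)) 0 := by
    rcases le_total (1/t) 1 with h | h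
    · rw [max_eq_right h, Real.log_one,
        max_eq_right (Real.log_nonpos (by positivity) h)]
    · rw [max_eq_left h, max_eq_left]
      exact Real.log_nonneg h
  have hlogS : Real.log 2 ≤ Real.log S := Real.log_le_log (by norm_num) hS1
  have hlogS0 : 0 ≤ Real.log S := Real.log_nonneg (by linarith)
  have hmax0 : 0 ≤ max (Real.log (1/t)) 0 := le_max_right _ _
  calc -Real.log α = Real.log α⁻¹ := (Real.log_inv α).symm
    _ ≤ Real.log (2 * S * max (1/t) 1) :=
        Real.log_le_log (by positivity) hinv
    _ = Real.log 2 + Real.log S + Real.log (max (1/t) 1) := by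
        rw [Real.log_mul (by positivity) (by positivity),
          Real.log_mul (by norm_num) (by positivity)]
    _ ≤ 2 * (Real.log S + max (Real.log (1/t)) 0) := by
        rw [hmaxlog]; linarith
end

section
/- For the uniform noising process on X = [S]^d with stationary distribution p_0 = Unif(X), the function φ(t) := (1/S) E_{x ~ q_t}[ Σ_{y: ham(y,x)=1} (-log s_t(y,x)) ] equals the negative time-derivative of KL(q_t || p_0); moreover φ(t) = (1/S) Σ_{i∈[d]} Σ_{c∈[S]} KL(q_t || (N_{i,c})_# q_t) ≥ 0, where N_{i,c}(x) = x ⊕_i c shifts coordinate i by c mod S. -/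
open Finset

/-- Kullback–Leibler divergence between two probability mass functions on a finite type. -/
noncomputable def klFin {α : Type*} [Fintype α] (p q : α → ℝ) : ℝ :=
  ∑ x, p x * Real.log (p x / q x)

/-- The bijection `N_{i,c}` shifting the `i`-th coordinate by `c` modulo `S`. -/
def Nshift {S d : ℕ} [NeZero S] (i : Fin d) (c : Fin S) (x : Fin d → Fin S) :
    Fin d → Fin S :=
  fun j => if j = i then x i + c else x j

/-- The pushforward `(N_{i,c})_# q`, i.e. `x ↦ q(N_{i,c}⁻¹ x) = q(N_{i,-c} x)`. -/
noncomputable def pushN {S d : ℕ} [NeZero S] (q : (Fin d → Fin S) → ℝ)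
    (i : Fin d) (c : Fin S) : (Fin d → Fin S) → ℝ :=
  fun x => q (Nshift i (-c) x)

/-- `φ(t) = (1/S) E_{x~q_t}[ ∑_{y : ham(y,x)=1} (-log s_t(y,x)) ]` with
`s_t(y,x) = q_t(y)/q_t(x)`. -/
noncomputable def phiUnif {S d : ℕ} (q : (Fin d → Fin S) → ℝ) : ℝ :=
  (1 / (S : ℝ)) * ∑ x, q x *
    ∑ y ∈ Finset.univ.filter (fun y => hamm y x = 1), (-(Real.log (q y / q x)))

section Aux
variable {S d : ℕ} [NeZero S]

lemma nshift_zero (i : Fin d) (x : Fin d → Fin S) : Nshift i 0 x = x := by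
  funext j; by_cases h : j = i <;> simp [Nshift, h]

lemma nshift_inv (i : Fin d) (c : Fin S) (x : Fin d → Fin S) :
    Nshift i c (Nshift i (-c) x) = x := by
  funext j; by_cases h : j = i <;> simp [Nshift, h]

def nshiftEquiv (i : Fin d) (c : Fin S) : (Fin d → Fin S) ≃ (Fin d → Fin S) where
  toFun := Nshift i c
  invFun := Nshift i (-c)
  left_inv := fun x => by
    have := nshift_inv i (-c) x; rwa [neg_neg] at this
  right_inv := fun x => nshift_inv i c x

omit [NeZero S] in
lemma hamm_comm (x y : Fin d → Fin S) : hamm x y = hamm y x := by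
  unfold hamm
  congr 1
  ext j
  simp [ne_comm]

lemma hamm_nshift (i : Fin d) {c : Fin S} (hc : c ≠ 0) (x : Fin d → Fin S) :
    hamm (Nshift i c x) x = 1 := by
  unfold hamm
  have h : (Finset.univ.filter fun j => Nshift i c x j ≠ x j) = {i} := by
    ext j
    simp only [Finset.mem_filter, Finset.mem_univ, true_and, Finset.mem_singleton, Nshift]
    by_cases h : j = i
    · subst h
      simp only [if_pos rfl, iff_true]
      simpa using hc
    · simp [h]
  rw [h, Finset.card_singleton]

/-- Reindexing the sum over Hamming-1 neighbors by (coordinate, nonzero shift). -/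
lemma sum_neighbors {M : Type*} [AddCommMonoid M] (x : Fin d → Fin S)
    (g : (Fin d → Fin S) → M) :
    ∑ y ∈ Finset.univ.filter (fun y => hamm y x = 1), g y
      = ∑ i : Fin d, ∑ c ∈ Finset.univ.filter (fun c : Fin S => c ≠ 0), g (Nshift i c x) := by
  rw [← Finset.sum_product']
  symm
  apply Finset.sum_bij (fun p _ => Nshift p.1 p.2 x)
  · rintro ⟨i, c⟩ hp
    simp only [Finset.mem_product, Finset.mem_filter, Finset.mem_univ, true_and] at hp
    simp only [Finset.mem_filter, Finset.mem_univ, true_and]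
    exact hamm_nshift i hp x
  · rintro ⟨i, c⟩ hp ⟨i', c'⟩ hp' heq
    simp only [Finset.mem_product, Finset.mem_filter, Finset.mem_univ, true_and] at hp hp'
    have hi : i = i' := by
      by_contra hne
      have := congrFun heq i
      simp only [Nshift, if_pos rfl, if_neg hne] at this
      -- this : x i + c = x i  (since i ≠ i')
      exact hp (by simpa using this)
    subst hi
    have := congrFun heq i
    simp only [Nshift, if_pos rfl] at this
    have : c = c' := by simpa using this
    simp [this]
  · intro y hy
    simp only [Finset.mem_filter, Finset.mem_univ, true_and] at hy
    obtain ⟨i₀, hset⟩ := Finset.card_eq_one.mp hy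
    have hmem : i₀ ∈ Finset.univ.filter fun j => y j ≠ x j := by
      rw [hset]; exact Finset.mem_singleton_self i₀
    have hne : y i₀ ≠ x i₀ := (Finset.mem_filter.mp hmem).2
    have heq : ∀ j, j ≠ i₀ → y j = x j := by
      intro j hj
      by_contra hne'
      have : j ∈ Finset.univ.filter fun j => y j ≠ x j := by
        simp [hne']
      rw [hset, Finset.mem_singleton] at this
      exact hj this
    refine ⟨⟨i₀, y i₀ - x i₀⟩, ?_, ?_⟩
    · simp only [Finset.mem_product, Finset.mem_filter, Finset.mem_univ, true_and]
      exact sub_ne_zero.mpr hne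
    · funext j
      by_cases h : j = i₀
      · subst h; simp [Nshift]
      · simp [Nshift, h, heq j h]
  · intros; rfl

lemma card_filter_ne_zero : (Finset.univ.filter fun c : Fin S => c ≠ 0).card = S - 1 := by
  rw [Finset.filter_ne', Finset.card_erase_of_mem (Finset.mem_univ 0), Finset.card_univ,
    Fintype.card_fin]

lemma card_neighbors (x : Fin d → Fin S) :
    (Finset.univ.filter (fun y => hamm y x = 1)).card = d * (S - 1) := by
  rw [Finset.card_eq_sum_ones, sum_neighbors x (fun _ => 1)]
  simp [card_filter_ne_zero, ← Finset.card_eq_sum_ones]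

lemma card_neighbors_real (x : Fin d → Fin S) :
    ((Finset.univ.filter (fun y => hamm y x = 1)).card : ℝ) = (d : ℝ) * ((S : ℝ) - 1) := by
  have hS : 1 ≤ S := Nat.one_le_iff_ne_zero.mpr (NeZero.ne S)
  rw [card_neighbors]
  push_cast [Nat.cast_sub hS]
  ring

lemma double_swap (F : (Fin d → Fin S) → (Fin d → Fin S) → ℝ) :
    ∑ x, ∑ y ∈ Finset.univ.filter (fun y => hamm y x = 1), F x y
      = ∑ x, ∑ y ∈ Finset.univ.filter (fun y => hamm y x = 1), F y x := by
  simp only [Finset.sum_filter]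
  rw [Finset.sum_comm]
  refine Finset.sum_congr rfl fun x _ => Finset.sum_congr rfl fun y _ => ?_
  rw [hamm_comm]

end Aux

section Aux2
variable {S d : ℕ} [NeZero S]

lemma nshiftEquiv_apply (i : Fin d) (c : Fin S) (x : Fin d → Fin S) :
    nshiftEquiv i c x = Nshift i c x := rfl

lemma klFin_nonneg {α : Type*} [Fintype α] (p r : α → ℝ)
    (hp : ∀ x, 0 < p x) (hr : ∀ x, 0 < r x)
    (h1 : ∑ x, p x = 1) (h2 : ∑ x, r x = 1) : 0 ≤ klFin p r := by
  have key : ∀ x, p x - r x ≤ p x * Real.log (p x / r x) := by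
    intro x
    have hl := Real.log_le_sub_one_of_pos (div_pos (hr x) (hp x))
    have hlog : Real.log (p x / r x) = -Real.log (r x / p x) := by
      rw [← Real.log_inv, inv_div]
    have hmul := mul_le_mul_of_nonneg_left hl (hp x).le
    have hc : p x * (r x / p x - 1) = r x - p x := by
      rw [mul_sub, mul_div_cancel₀ _ (hp x).ne']; ring
    rw [hc] at hmul
    rw [hlog]
    linarith
  have : (0 : ℝ) = ∑ x, (p x - r x) := by
    rw [Finset.sum_sub_distrib, h1, h2]; ring
  rw [klFin, this]
  exact Finset.sum_le_sum fun x _ => key x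

lemma sum_pushN (f : (Fin d → Fin S) → ℝ) (i : Fin d) (c : Fin S) :
    ∑ x, pushN f i c x = ∑ x, f x := by
  have := Equiv.sum_comp (nshiftEquiv i (-c)) f
  simpa [pushN, nshiftEquiv_apply] using this

lemma phi_eq_sum_kl (f : (Fin d → Fin S) → ℝ) (hf : ∀ x, 0 < f x) :
    phiUnif f = (1 / (S : ℝ)) * ∑ i : Fin d, ∑ c : Fin S, klFin f (pushN f i c) := by
  -- T i c := ∑ x, f x * log (f x / f (Nshift i c x))
  set T : Fin d → Fin S → ℝ :=
    fun i c => ∑ x, f x * Real.log (f x / f (Nshift i c x)) with hT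
  have hkl : ∀ i c, klFin f (pushN f i c) = T i (-c) := fun i c => rfl
  have hT0 : ∀ i, T i 0 = 0 := by
    intro i
    rw [hT]
    simp only [nshift_zero]
    have : ∀ x : Fin d → Fin S, f x / f x = 1 := fun x => div_self (hf x).ne'
    simp [this]
  have hneg : ∀ i, ∑ c : Fin S, T i (-c) = ∑ c : Fin S, T i c := fun i =>
    Equiv.sum_comp (Equiv.neg (Fin S)) (T i)
  have hsplit : ∀ i, ∑ c : Fin S, T i c
      = ∑ c ∈ Finset.univ.filter (fun c : Fin S => c ≠ 0), T i c := by
    intro i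
    rw [← Finset.sum_filter_add_sum_filter_not Finset.univ (fun c : Fin S => c = 0) (T i)]
    have : Finset.filter (fun c : Fin S => c = 0) Finset.univ = {0} := by
      rw [Finset.filter_eq']; simp
    rw [this, Finset.sum_singleton, hT0, zero_add]
  have hphi : phiUnif f = (1 / (S : ℝ)) * ∑ i : Fin d,
      ∑ c ∈ Finset.univ.filter (fun c : Fin S => c ≠ 0), T i c := by
    unfold phiUnif
    congr 1
    have hlog : ∀ x y : Fin d → Fin S, -(Real.log (f y / f x)) = Real.log (f x / f y) := by
      intro x y; rw [← Real.log_inv, inv_div]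
    calc ∑ x, f x * ∑ y ∈ Finset.univ.filter (fun y => hamm y x = 1), (-(Real.log (f y / f x)))
        = ∑ x, ∑ y ∈ Finset.univ.filter (fun y => hamm y x = 1),
            f x * Real.log (f x / f y) := by
          refine Finset.sum_congr rfl fun x _ => ?_
          rw [Finset.mul_sum]
          exact Finset.sum_congr rfl fun y _ => by rw [hlog]
      _ = ∑ x, ∑ i : Fin d, ∑ c ∈ Finset.univ.filter (fun c : Fin S => c ≠ 0),
            f x * Real.log (f x / f (Nshift i c x)) := by
          refine Finset.sum_congr rfl fun x _ => ?_
          exact sum_neighbors x (fun y => f x * Real.log (f x / f y))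
      _ = ∑ i : Fin d, ∑ c ∈ Finset.univ.filter (fun c : Fin S => c ≠ 0), T i c := by
          rw [Finset.sum_comm]
          refine Finset.sum_congr rfl fun i _ => Finset.sum_comm
  rw [hphi]
  congr 1
  refine Finset.sum_congr rfl fun i _ => ?_
  rw [show ∑ c : Fin S, klFin f (pushN f i c) = ∑ c : Fin S, T i (-c) from
    Finset.sum_congr rfl fun c _ => hkl i c, hneg i, hsplit i]

lemma sum_A_log (f : (Fin d → Fin S) → ℝ) (hf : ∀ x, 0 < f x) :
    ∑ x, (((1 / (S : ℝ)) * ∑ y ∈ Finset.univ.filter (fun y => hamm y x = 1), f y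
        - ((d : ℝ) * ((S : ℝ) - 1) / (S : ℝ)) * f x) * Real.log (f x))
      = - phiUnif f := by
  set K := (d : ℝ) * ((S : ℝ) - 1) / (S : ℝ) with hK
  have hphi : phiUnif f
      = (1 / (S : ℝ)) * ((d : ℝ) * ((S : ℝ) - 1) * ∑ x, f x * Real.log (f x))
        - (1 / (S : ℝ)) * ∑ x, ∑ y ∈ Finset.univ.filter (fun y => hamm y x = 1),
            f x * Real.log (f y) := by
    unfold phiUnif
    have step : ∀ x, f x * ∑ y ∈ Finset.univ.filter (fun y => hamm y x = 1),
        (-(Real.log (f y / f x)))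
        = (d : ℝ) * ((S : ℝ) - 1) * (f x * Real.log (f x))
          - ∑ y ∈ Finset.univ.filter (fun y => hamm y x = 1), f x * Real.log (f y) := by
      intro x
      rw [Finset.mul_sum]
      have : ∀ y ∈ Finset.univ.filter (fun y => hamm y x = 1),
          f x * (-(Real.log (f y / f x)))
            = f x * Real.log (f x) - f x * Real.log (f y) := by
        intro y _
        rw [Real.log_div (hf y).ne' (hf x).ne']; ring
      rw [Finset.sum_congr rfl this, Finset.sum_sub_distrib, Finset.sum_const,
        nsmul_eq_mul, card_neighbors_real]
    rw [Finset.sum_congr rfl fun x _ => step x, Finset.sum_sub_distrib, ← Finset.mul_sum]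
    ring
  have hswap : ∑ x, ∑ y ∈ Finset.univ.filter (fun y => hamm y x = 1), f y * Real.log (f x)
      = ∑ x, ∑ y ∈ Finset.univ.filter (fun y => hamm y x = 1), f x * Real.log (f y) :=
    double_swap (fun x y => f y * Real.log (f x))
  calc ∑ x, (((1 / (S : ℝ)) * ∑ y ∈ Finset.univ.filter (fun y => hamm y x = 1), f y
        - K * f x) * Real.log (f x))
      = ∑ x, ((1 / (S : ℝ)) * ∑ y ∈ Finset.univ.filter (fun y => hamm y x = 1),
          f y * Real.log (f x) - K * (f x * Real.log (f x))) := by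
        refine Finset.sum_congr rfl fun x _ => ?_
        rw [show (∑ y ∈ Finset.univ.filter (fun y => hamm y x = 1), f y * Real.log (f x))
          = (∑ y ∈ Finset.univ.filter (fun y => hamm y x = 1), f y) * Real.log (f x) from
          (Finset.sum_mul ..).symm]
        ring
    _ = (1 / (S : ℝ)) * ∑ x, ∑ y ∈ Finset.univ.filter (fun y => hamm y x = 1),
          f y * Real.log (f x) - K * ∑ x, f x * Real.log (f x) := by
        rw [Finset.sum_sub_distrib, ← Finset.mul_sum, ← Finset.mul_sum]
    _ = - phiUnif f := by
        rw [hswap, hphi, hK]; ring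

end Aux2


/-- For the uniform noising process on `[S]^d` (marginals `q_t` solving the Kolmogorov
forward equation) with stationary distribution `p_0 = Unif([S]^d)`, the function
`φ(t) = (1/S) E_{x~q_t} ∑_{ham(y,x)=1} (-log s_t(y,x))` equals the negative time-derivative
of `KL(q_t ‖ p_0)`; moreover `φ(t) = (1/S) ∑_{i∈[d]} ∑_{c∈[S]} KL(q_t ‖ (N_{i,c})_# q_t) ≥ 0`. -/
theorem phiUnif_eq_neg_deriv_KL (S d : ℕ) [NeZero S]
    (q : ℝ → (Fin d → Fin S) → ℝ)
    (hsum : ∀ t, ∑ x, q t x = 1)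
    (hpos : ∀ t, 0 < t → ∀ x, 0 < q t x)
    (hkol : ∀ t x, HasDerivAt (fun s => q s x)
        ((1 / (S : ℝ)) * ∑ y ∈ Finset.univ.filter (fun y => hamm y x = 1), q t y
          - ((d : ℝ) * ((S : ℝ) - 1) / (S : ℝ)) * q t x) t)
    (t : ℝ) (ht : 0 < t) :
    HasDerivAt (fun s => klFin (q s) (fun _ => 1 / ((S : ℝ) ^ d)))
        (-(phiUnif (q t))) t ∧
    phiUnif (q t)
      = (1 / (S : ℝ)) * ∑ i : Fin d, ∑ c : Fin S, klFin (q t) (pushN (q t) i c) ∧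
    0 ≤ phiUnif (q t) := by
  have hSpos : (0 : ℝ) < (S : ℝ) := by
    have : (0 : ℕ) < S := Nat.pos_of_ne_zero (NeZero.ne S)
    exact_mod_cast this
  have hq := hpos t ht
  set c : ℝ := 1 / (S : ℝ) ^ d with hcdef
  have hcpos : (0 : ℝ) < c := by positivity
  set A : (Fin d → Fin S) → ℝ := fun x =>
    (1 / (S : ℝ)) * ∑ y ∈ Finset.univ.filter (fun y => hamm y x = 1), q t y
      - ((d : ℝ) * ((S : ℝ) - 1) / (S : ℝ)) * q t x with hA
  have hA0 : ∑ x, A x = 0 := by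
    have h1 : HasDerivAt (fun s => ∑ x, q s x) (∑ x, A x) t :=
      HasDerivAt.fun_sum (fun x _ => hkol t x)
    have h2 : (fun s => ∑ x, q s x) = fun _ => (1 : ℝ) := funext hsum
    rw [h2] at h1
    exact h1.unique (hasDerivAt_const t 1)
  have hderiv : HasDerivAt (fun s => klFin (q s) (fun _ => 1 / ((S : ℝ) ^ d)))
      (-(phiUnif (q t))) t := by
    have hterm : ∀ x : Fin d → Fin S,
        HasDerivAt (fun s => q s x * Real.log (q s x / c))
          (A x * (Real.log (q t x / c) + 1)) t := by
      intro x
      have h1 : HasDerivAt (fun s => q s x) (A x) t := hkol t x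
      have h2 : HasDerivAt (fun s => q s x / c) (A x / c) t := h1.div_const c
      have h3 : HasDerivAt (fun s => Real.log (q s x / c))
          ((A x / c) / (q t x / c)) t := h2.log (div_pos (hq x) hcpos).ne'
      have h4 := h1.mul h3
      refine h4.congr_deriv ?_
      have e1 : A x / c / (q t x / c) = A x / q t x := by
        field_simp
      rw [e1, mul_div_cancel₀ _ (hq x).ne']
      ring
    have Hsum : HasDerivAt (fun s => ∑ x, q s x * Real.log (q s x / c))
        (∑ x, A x * (Real.log (q t x / c) + 1)) t :=
      HasDerivAt.fun_sum (fun x _ => hterm x)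
    have hval : ∑ x, A x * (Real.log (q t x / c) + 1) = -(phiUnif (q t)) := by
      have hstep : ∀ x : Fin d → Fin S, A x * (Real.log (q t x / c) + 1)
          = A x * Real.log (q t x) + (1 - Real.log c) * A x := by
        intro x
        rw [Real.log_div (hq x).ne' hcpos.ne']
        ring
      rw [Finset.sum_congr rfl fun x _ => hstep x, Finset.sum_add_distrib,
        ← Finset.mul_sum, hA0, mul_zero, add_zero]
      exact sum_A_log (q t) hq
    rw [← hval]
    exact Hsum
  have hrepr := phi_eq_sum_kl (q t) hq
  refine ⟨hderiv, hrepr, ?_⟩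
  rw [hrepr]
  apply mul_nonneg (by positivity)
  refine Finset.sum_nonneg fun i _ => Finset.sum_nonneg fun cc _ => ?_
  refine klFin_nonneg _ _ hq (fun x => hq _) (hsum t) ?_
  rw [sum_pushN]
  exact hsum t
end
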